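/- For any two matrices M, N ≥ κ^{-1} I (positive definite with smallest eigenvalue at least κ^{-1}, κ ≥ 1), it holds that |log₂ det(M) − log₂ det(N)| ≤ κ log₂(e) ‖M − N‖₁. -/

import Mathlib

open Matrix Classical

/-- The trace norm of a (Hermitian) real matrix: the sum of the absolute values of its
eigenvalues. -/
noncomputable def traceNorm {n : Type*} [Fintype n] [DecidableEq n]
    (A : Matrix n n ℝ) : ℝ :=
  if h : A.IsHermitian then ∑ i, |h.eigenvalues i| else 0

section aux
set_option linter.unusedSectionVars false
variable {n : Type*} [Fintype n] [DecidableEq n]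

lemma isHermitian_of_isSymm {A : Matrix n n ℝ} (h : A.IsSymm) : A.IsHermitian := by
  rwa [Matrix.IsHermitian, conjTranspose_eq_transpose_of_trivial]

lemma psd_smul {c : ℝ} (hc : 0 ≤ c) {A : Matrix n n ℝ} (hA : A.PosSemidef) :
    (c • A).PosSemidef := by
  refine PosSemidef.of_dotProduct_mulVec_nonneg ?_ (fun x => ?_)
  · rw [Matrix.IsHermitian, conjTranspose_smul, hA.1]; simp
  · rw [smul_mulVec, dotProduct_smul]
    exact mul_nonneg hc (hA.dotProduct_mulVec_nonneg x)

lemma psd_diag_nonneg {A : Matrix n n ℝ} (hA : A.PosSemidef) (i : n) : 0 ≤ A i i := by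
  have := hA.dotProduct_mulVec_nonneg (Pi.single i 1)
  simpa [mulVec_single, single_dotProduct] using this

lemma posdef_of_shift {κ : ℝ} (hκ : 1 ≤ κ) {A : Matrix n n ℝ} (hAs : A.IsSymm)
    (hA : (A - κ⁻¹ • (1 : Matrix n n ℝ)).PosSemidef) : A.PosDef := by
  have hκ0 : 0 < κ⁻¹ := inv_pos.mpr (lt_of_lt_of_le one_pos hκ)
  refine PosDef.of_dotProduct_mulVec_pos (isHermitian_of_isSymm hAs) fun x hx => ?_
  have hsx : star x = x := by simp
  have hx2 : 0 < dotProduct x x := by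
    rcases lt_or_eq_of_le (Finset.sum_nonneg fun i _ => mul_self_nonneg (x i)) with h|h
    · exact h
    · exact absurd (dotProduct_self_eq_zero.mp h.symm) hx
  have hexp : dotProduct (star x) ((A - κ⁻¹ • (1 : Matrix n n ℝ)) *ᵥ x)
      = dotProduct (star x) (A *ᵥ x) - κ⁻¹ * dotProduct x x := by
    rw [sub_mulVec, dotProduct_sub, smul_mulVec, one_mulVec, dotProduct_smul, hsx]
    simp [smul_eq_mul]
  have h1 := hA.dotProduct_mulVec_nonneg x
  rw [hexp] at h1
  nlinarith

/-- Trace duality: `|tr (X C)| ≤ κ Σ |λᵢ(C)|` when `0 ≤ X ≤ κ 1`. -/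
lemma trace_mul_abs_le {κ : ℝ} {X C : Matrix n n ℝ}
    (hX : X.PosSemidef) (hXκ : (κ • (1 : Matrix n n ℝ) - X).PosSemidef)
    (hC : C.IsHermitian) :
    |(X * C).trace| ≤ κ * ∑ i, |hC.eigenvalues i| := by
  set U : Matrix n n ℝ := (hC.eigenvectorUnitary : Matrix n n ℝ) with hU
  have hUmem : U ∈ Matrix.unitaryGroup n ℝ := (hC.eigenvectorUnitary).2
  have hUU : U * star U = 1 := (Matrix.mem_unitaryGroup_iff).mp hUmem
  have hUU' : star U * U = 1 := (Matrix.mem_unitaryGroup_iff').mp hUmem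
  set D : Matrix n n ℝ := Matrix.diagonal (RCLike.ofReal ∘ hC.eigenvalues) with hD
  have hspec : C = U * D * star U := hC.spectral_theorem
  set P : Matrix n n ℝ := star U * X * U with hP
  have hPpsd : P.PosSemidef := by
    have := hX.mul_mul_conjTranspose_same (star U)
    simpa [hP, conjTranspose_conjTranspose, star_eq_conjTranspose] using this
  have hPκ : ∀ i, P i i ≤ κ := by
    intro i
    have h2 : (star U * (κ • (1 : Matrix n n ℝ) - X) * U).PosSemidef := by
      have := hXκ.mul_mul_conjTranspose_same (star U)
      simpa [conjTranspose_conjTranspose, star_eq_conjTranspose] using this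
    have heq : star U * (κ • (1 : Matrix n n ℝ) - X) * U
        = κ • (1 : Matrix n n ℝ) - P := by
      rw [Matrix.mul_sub, Matrix.sub_mul, hP]
      congr 1
      rw [Matrix.mul_smul, Matrix.mul_one, Matrix.smul_mul, hUU']
    rw [heq] at h2
    have := psd_diag_nonneg h2 i
    simp only [Matrix.sub_apply, Matrix.smul_apply, Matrix.one_apply_eq, smul_eq_mul, mul_one] at this
    linarith
  have htr : (X * C).trace = ∑ i, hC.eigenvalues i * P i i := by
    conv_lhs => rw [hspec]
    rw [← Matrix.mul_assoc, ← Matrix.mul_assoc, Matrix.trace_mul_cycle]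
    have hcol : star U * (X * U) * D = P * D := by
      rw [hP]; simp only [Matrix.mul_assoc]
    rw [hcol]
    simp [Matrix.trace, Matrix.diag, Matrix.mul_diagonal, hD, mul_comm]
  rw [htr]
  calc |∑ i, hC.eigenvalues i * P i i| ≤ ∑ i, |hC.eigenvalues i * P i i| :=
        Finset.abs_sum_le_sum_abs _ _
    _ ≤ ∑ i, κ * |hC.eigenvalues i| := by
        apply Finset.sum_le_sum
        intro i _
        rw [abs_mul, abs_of_nonneg (psd_diag_nonneg hPpsd i), mul_comm]
        exact mul_le_mul_of_nonneg_right (hPκ i) (abs_nonneg _)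
    _ = κ * ∑ i, |hC.eigenvalues i| := by rw [Finset.mul_sum]

lemma exists_sqrt_of_posDef {B : Matrix n n ℝ} (hB : B.PosDef) :
    ∃ S : Matrix n n ℝ, S * S = B ∧ S.IsHermitian := by
  have hBH := hB.1
  set U : Matrix n n ℝ := (hBH.eigenvectorUnitary : Matrix n n ℝ) with hU
  have hUU' : star U * U = 1 := (Matrix.mem_unitaryGroup_iff').mp (hBH.eigenvectorUnitary).2
  have hspec : B = U * diagonal (RCLike.ofReal ∘ hBH.eigenvalues) * star U :=
    hBH.spectral_theorem
  set D : Matrix n n ℝ := diagonal (fun i => Real.sqrt (hBH.eigenvalues i)) with hD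
  refine ⟨U * D * star U, ?_, ?_⟩
  · have hd : D * D = diagonal (RCLike.ofReal ∘ hBH.eigenvalues) := by
      rw [hD, diagonal_mul_diagonal]; congr 1; funext i
      simp [Real.mul_self_sqrt (hB.eigenvalues_pos i).le]
    calc U * D * star U * (U * D * star U) = U * (D * (star U * U) * D) * star U := by
          simp only [Matrix.mul_assoc]
      _ = B := by rw [hUU', Matrix.mul_one, hd]; exact hspec.symm
  · have := isHermitian_mul_mul_conjTranspose U
      (isHermitian_diagonal (fun i => Real.sqrt (hBH.eigenvalues i)))
    simpa [hD, star_eq_conjTranspose] using this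

/-- Concavity bound: `log det A − log det B ≤ tr (B⁻¹ (A − B))`. -/
lemma log_det_sub_le {A B : Matrix n n ℝ} (hA : A.PosDef) (hB : B.PosDef) :
    Real.log A.det - Real.log B.det ≤ (B⁻¹ * (A - B)).trace := by
  obtain ⟨S, hSS, hSH⟩ := exists_sqrt_of_posDef hB
  have hdetB : (0:ℝ) < B.det := hB.det_pos
  have hdetA : (0:ℝ) < A.det := hA.det_pos
  have hdetSS : S.det * S.det = B.det := by rw [← Matrix.det_mul, hSS]
  have hdetS : S.det ≠ 0 := by
    intro h; rw [h, mul_zero] at hdetSS; exact hdetB.ne hdetSS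
  have hSunit : IsUnit S.det := hdetS.isUnit
  have hSinv : S⁻¹ * S = 1 := Matrix.nonsing_inv_mul _ hSunit
  have hSinv' : S * S⁻¹ = 1 := Matrix.mul_nonsing_inv _ hSunit
  have hSinvH : (S⁻¹).IsHermitian := hSH.inv
  set C : Matrix n n ℝ := S⁻¹ * A * S⁻¹ with hCdef
  have hCpsd : C.PosSemidef := by
    have := hA.posSemidef.mul_mul_conjTranspose_same S⁻¹
    rwa [hSinvH.eq] at this
  have hCH : C.IsHermitian := hCpsd.1
  have hdetC : C.det = A.det / B.det := by
    rw [hCdef, Matrix.det_mul, Matrix.det_mul, Matrix.det_nonsing_inv, ← hdetSS]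
    rw [Ring.inverse_eq_inv]
    field_simp
  have hdetCpos : 0 < C.det := hdetC ▸ div_pos hdetA hdetB
  have hprod : C.det = ∏ i, hCH.eigenvalues i := by
    have := hCH.det_eq_prod_eigenvalues
    simpa using this
  have heigpos : ∀ i, 0 < hCH.eigenvalues i := by
    intro i
    rcases lt_or_eq_of_le (hCpsd.eigenvalues_nonneg i) with h|h
    · exact h
    · exfalso
      have h0 : C.det = 0 := by
        rw [hprod]; exact Finset.prod_eq_zero (Finset.mem_univ i) h.symm
      exact hdetCpos.ne' h0
  have htrC : C.trace = ∑ i, hCH.eigenvalues i := by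
    conv_lhs => rw [hCH.spectral_theorem, Unitary.conjStarAlgAut_apply]
    rw [Matrix.trace_mul_cycle,
      (Matrix.mem_unitaryGroup_iff').mp (hCH.eigenvectorUnitary).2, Matrix.one_mul]
    simp [Matrix.trace, Matrix.diag, Matrix.diagonal]
  have hBinv : B⁻¹ = S⁻¹ * S⁻¹ := by rw [← hSS, Matrix.mul_inv_rev]
  have htrid : (B⁻¹ * (A - B)).trace = C.trace - (Fintype.card n : ℝ) := by
    have h1 : B⁻¹ * (A - B) = B⁻¹ * A - 1 := by
      rw [Matrix.mul_sub, Matrix.nonsing_inv_mul _ hdetB.ne'.isUnit]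
    have h2 : (B⁻¹ * A).trace = C.trace := by
      rw [hCdef]
      conv_rhs => rw [Matrix.trace_mul_cycle]
      rw [hBinv]
    rw [h1, Matrix.trace_sub, h2, Matrix.trace_one]
  have hlog : Real.log A.det - Real.log B.det = Real.log C.det := by
    rw [hdetC, Real.log_div hdetA.ne' hdetB.ne']
  rw [hlog, htrid, htrC, hprod]
  rw [Real.log_prod (fun i _ => (heigpos i).ne')]
  have : ∑ i, Real.log (hCH.eigenvalues i) ≤ ∑ i, (hCH.eigenvalues i - 1) :=
    Finset.sum_le_sum fun i _ => Real.log_le_sub_one_of_pos (heigpos i)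
  calc ∑ i, Real.log (hCH.eigenvalues i) ≤ ∑ i, (hCH.eigenvalues i - 1) := this
    _ = (∑ i, hCH.eigenvalues i) - (Fintype.card n : ℝ) := by
        rw [Finset.sum_sub_distrib]; simp

/-- `A ≥ κ⁻¹ 1` implies `A⁻¹ ≤ κ 1`. -/
lemma inv_le_smul_one {κ : ℝ} (hκ : 1 ≤ κ) {A : Matrix n n ℝ}
    (hApd : A.PosDef)
    (hA : (A - κ⁻¹ • (1 : Matrix n n ℝ)).PosSemidef) :
    (κ • (1 : Matrix n n ℝ) - A⁻¹).PosSemidef := by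
  have hκ0 : (κ:ℝ) ≠ 0 := (lt_of_lt_of_le one_pos hκ).ne'
  obtain ⟨S, hSS, hSH⟩ := exists_sqrt_of_posDef hApd
  have hdetA : (0:ℝ) < A.det := hApd.det_pos
  have hdetSS : S.det * S.det = A.det := by rw [← Matrix.det_mul, hSS]
  have hdetS : S.det ≠ 0 := by
    intro h; rw [h, mul_zero] at hdetSS; exact hdetA.ne hdetSS
  have hSunit : IsUnit S.det := hdetS.isUnit
  have hSinv : S⁻¹ * S = 1 := Matrix.nonsing_inv_mul _ hSunit
  have hSinv' : S * S⁻¹ = 1 := Matrix.mul_nonsing_inv _ hSunit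
  have hSinvH : (S⁻¹).IsHermitian := hSH.inv
  have hAinv : A⁻¹ = S⁻¹ * S⁻¹ := by rw [← hSS, Matrix.mul_inv_rev]
  have key : κ • (1 : Matrix n n ℝ) - A⁻¹
      = S⁻¹ * (κ • (A - κ⁻¹ • (1 : Matrix n n ℝ))) * S⁻¹ := by
    have hSAS : S⁻¹ * A * S⁻¹ = 1 := by
      have h9 : S⁻¹ * (S * S) * S⁻¹ = (S⁻¹ * S) * (S * S⁻¹) := by
        simp only [Matrix.mul_assoc]
      rw [← hSS, h9, hSinv, hSinv', Matrix.one_mul]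
    rw [smul_sub, smul_smul, mul_inv_cancel₀ hκ0, one_smul, Matrix.mul_sub, Matrix.mul_one,
      Matrix.sub_mul, Matrix.mul_smul, Matrix.smul_mul, hSAS, ← hAinv]
  rw [key]
  have hpsd : (κ • (A - κ⁻¹ • (1 : Matrix n n ℝ))).PosSemidef :=
    psd_smul (le_trans zero_le_one hκ) hA
  have := hpsd.mul_mul_conjTranspose_same S⁻¹
  rwa [hSinvH.eq] at this

end aux


/-- For real symmetric `M, N ≥ κ⁻¹ 1` with `κ ≥ 1`,
`|log₂ det M − log₂ det N| ≤ κ log₂(e) ‖M − N‖₁`. -/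
theorem logdet_lipschitz {n : Type*} [Fintype n] [DecidableEq n]
    (κ : ℝ) (hκ : 1 ≤ κ)
    (M N : Matrix n n ℝ) (hMs : M.IsSymm) (hNs : N.IsSymm)
    (hM : (M - κ⁻¹ • (1 : Matrix n n ℝ)).PosSemidef)
    (hN : (N - κ⁻¹ • (1 : Matrix n n ℝ)).PosSemidef) :
    |Real.logb 2 M.det - Real.logb 2 N.det| ≤ κ * Real.logb 2 (Real.exp 1) * traceNorm (M - N) := by
  have hMpd : M.PosDef := posdef_of_shift hκ hMs hM
  have hNpd : N.PosDef := posdef_of_shift hκ hNs hN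
  have hCherm : (M - N).IsHermitian := isHermitian_of_isSymm (hMs.sub hNs)
  set T : ℝ := ∑ i, |hCherm.eigenvalues i| with hT
  have htn : traceNorm (M - N) = T := by rw [traceNorm, dif_pos hCherm]
  -- key bound in natural log
  have key : |Real.log M.det - Real.log N.det| ≤ κ * T := by
    rw [abs_sub_le_iff]
    constructor
    · calc Real.log M.det - Real.log N.det ≤ (N⁻¹ * (M - N)).trace :=
            log_det_sub_le hMpd hNpd
        _ ≤ |(N⁻¹ * (M - N)).trace| := le_abs_self _
        _ ≤ κ * T := trace_mul_abs_le hNpd.inv.posSemidef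
            (inv_le_smul_one hκ hNpd hN) hCherm
    · have hflip : M⁻¹ * (N - M) = -(M⁻¹ * (M - N)) := by
        rw [← Matrix.mul_neg, neg_sub]
      calc Real.log N.det - Real.log M.det ≤ (M⁻¹ * (N - M)).trace :=
            log_det_sub_le hNpd hMpd
        _ = -((M⁻¹ * (M - N)).trace) := by rw [hflip, Matrix.trace_neg]
        _ ≤ |(M⁻¹ * (M - N)).trace| := neg_le_abs _
        _ ≤ κ * T := trace_mul_abs_le hMpd.inv.posSemidef
            (inv_le_smul_one hκ hMpd hM) hCherm
  have hlog2 : (0:ℝ) < Real.log 2 := Real.log_pos (by norm_num)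
  rw [htn, Real.logb, Real.logb, Real.logb, Real.log_exp, div_sub_div_same, abs_div,
    abs_of_pos hlog2]
  rw [show κ * (1 / Real.log 2) * T = (κ * T) / Real.log 2 by ring]
  exact div_le_div_of_nonneg_right key hlog2.le
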